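/- For every odd integer k ≥ 1 and all real numbers a ≤ b, |∫_a^b B_k(x) dx| ≤ ((1 − (k+3)·2^{−(k+1)})/(k² + 3k + 2)) · h^{k+1}. -/

import Mathlib

open MeasureTheory Set

/-- Largest mesh point of `{h·z + α : z ∈ ℤ}` at or below `x`. -/
noncomputable def meshFloor (h α x : ℝ) : ℝ := α + h * ⌊(x - α) / h⌋

/-- Smallest mesh point of `{h·z + α : z ∈ ℤ}` strictly above `meshFloor h α x`. -/
noncomputable def meshCeil (h α x : ℝ) : ℝ := meshFloor h α x + h

/-- Relative position of `x` between consecutive mesh points. -/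
noncomputable def meshFrac (h α x : ℝ) : ℝ := (x - meshFloor h α x) / h

/-- Expected `k`-th signed error of stochastic rounding at `x`. -/
noncomputable def stochSignedErr (h α : ℝ) (k : ℕ) (x : ℝ) : ℝ :=
  (meshFloor h α x - x) ^ k * (1 - meshFrac h α x)
    + (meshCeil h α x - x) ^ k * meshFrac h α x

/-- The local (one-cell) form of the expected signed error, as a function of `u = x - fl(x)`. -/
noncomputable def phiFn (h : ℝ) (k : ℕ) (u : ℝ) : ℝ :=
  (-u) ^ k * (1 - u / h) + (h - u) ^ k * (u / h)

/-- An explicit antiderivative of `phiFn` (for odd `k`). -/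
noncomputable def PhiFn (h : ℝ) (k : ℕ) (u : ℝ) : ℝ :=
  -u ^ (k+1) / ((k:ℝ)+1) + u ^ (k+2) / (((k:ℝ)+2) * h)
    - (h - u) ^ (k+1) * u / (((k:ℝ)+1) * h)
    - (h - u) ^ (k+2) / (((k:ℝ)+1) * ((k:ℝ)+2) * h)

lemma stoch_eq_phi (h α : ℝ) (k : ℕ) (x : ℝ) :
    stochSignedErr h α k x = phiFn h k (x - meshFloor h α x) := by
  unfold stochSignedErr meshCeil meshFrac phiFn
  ring

lemma hasDerivAt_PhiFn (h : ℝ) (hh : h ≠ 0) (k : ℕ) (hodd : Odd k) (u : ℝ) :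
    HasDerivAt (PhiFn h k) (phiFn h k u) u := by
  have hk1 : ((k:ℝ)+1) ≠ 0 := by positivity
  have hk2 : ((k:ℝ)+2) ≠ 0 := by positivity
  have h1 : HasDerivAt (fun u : ℝ => u ^ (k+1)) (((k:ℝ)+1) * u ^ k) u := by
    simpa using hasDerivAt_pow (k+1) u
  have h2 : HasDerivAt (fun u : ℝ => u ^ (k+2)) (((k:ℝ)+2) * u ^ (k+1)) u := by
    simpa using hasDerivAt_pow (k+2) u
  have hs : HasDerivAt (fun u : ℝ => h - u) (-1) u := (hasDerivAt_id u).const_sub h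
  have h3 : HasDerivAt (fun u : ℝ => (h - u) ^ (k+1)) (((k:ℝ)+1) * (h-u) ^ k * (-1)) u := by
    simpa [Function.comp_def] using (hasDerivAt_pow (k+1) (h-u)).comp u hs
  have h4 : HasDerivAt (fun u : ℝ => (h - u) ^ (k+2)) (((k:ℝ)+2) * (h-u) ^ (k+1) * (-1)) u := by
    simpa [Function.comp_def] using (hasDerivAt_pow (k+2) (h-u)).comp u hs
  have H := (((h1.neg.div_const ((k:ℝ)+1)).add (h2.div_const (((k:ℝ)+2)*h))).sub
      ((h3.mul (hasDerivAt_id u)).div_const (((k:ℝ)+1)*h))).sub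
      (h4.div_const (((k:ℝ)+1)*((k:ℝ)+2)*h))
  refine H.congr_deriv ?_
  symm
  rw [phiFn, hodd.neg_pow, id_eq]
  field_simp
  ring

lemma PhiFn_zero (h : ℝ) (hh : h ≠ 0) (k : ℕ) :
    PhiFn h k 0 = -h ^ (k+1) / (((k:ℝ)+1) * ((k:ℝ)+2)) := by
  have hk1 : ((k:ℝ)+1) ≠ 0 := by positivity
  have hk2 : ((k:ℝ)+2) ≠ 0 := by positivity
  rw [PhiFn]
  rw [show h - (0:ℝ) = h by ring]
  field_simp
  ring

lemma PhiFn_h (h : ℝ) (hh : h ≠ 0) (k : ℕ) : PhiFn h k h = PhiFn h k 0 := by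
  have hk1 : ((k:ℝ)+1) ≠ 0 := by positivity
  have hk2 : ((k:ℝ)+2) ≠ 0 := by positivity
  rw [PhiFn_zero h hh k, PhiFn]
  rw [show h - h = (0:ℝ) by ring]
  rw [zero_pow (by omega : k + 1 ≠ 0), zero_pow (by omega : k + 2 ≠ 0)]
  field_simp
  ring

lemma phiFn_eq_prod (h : ℝ) (hh : h ≠ 0) (k : ℕ) (hk : 1 ≤ k) (hodd : Odd k) (u : ℝ) :
    phiFn h k u = (u * (h - u) / h) * ((h - u) ^ (k-1) - u ^ (k-1)) := by
  have e1 : u ^ k = u ^ (k-1) * u := by rw [← pow_succ, Nat.sub_add_cancel hk]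
  have e2 : (h - u) ^ k = (h - u) ^ (k-1) * (h - u) := by
    rw [← pow_succ, Nat.sub_add_cancel hk]
  rw [phiFn, hodd.neg_pow, e1, e2]
  field_simp
  ring

lemma phiFn_nonneg (h : ℝ) (hh : 0 < h) (k : ℕ) (hk : 1 ≤ k) (hodd : Odd k)
    {u : ℝ} (h0 : 0 ≤ u) (h1 : u ≤ h/2) : 0 ≤ phiFn h k u := by
  rw [phiFn_eq_prod h hh.ne' k hk hodd]
  apply mul_nonneg
  · apply div_nonneg (mul_nonneg h0 (by linarith)) hh.le
  · have := pow_le_pow_left₀ h0 (by linarith : u ≤ h - u) (k-1)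
    linarith

lemma phiFn_nonpos (h : ℝ) (hh : 0 < h) (k : ℕ) (hk : 1 ≤ k) (hodd : Odd k)
    {u : ℝ} (h0 : h/2 ≤ u) (h1 : u ≤ h) : phiFn h k u ≤ 0 := by
  rw [phiFn_eq_prod h hh.ne' k hk hodd]
  apply mul_nonpos_of_nonneg_of_nonpos
  · apply div_nonneg (mul_nonneg (by linarith) (by linarith)) hh.le
  · have := pow_le_pow_left₀ (by linarith : (0:ℝ) ≤ h - u) (by linarith : h - u ≤ u) (k-1)
    linarith

lemma PhiFn_half_sub (h : ℝ) (hh : 0 < h) (k : ℕ) :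
    PhiFn h k (h/2) - PhiFn h k 0
      = ((1 - ((k : ℝ) + 3) / 2 ^ (k + 1)) / ((k : ℝ) ^ 2 + 3 * k + 2)) * h ^ (k + 1) := by
  have hk1 : ((k:ℝ)+1) ≠ 0 := by positivity
  have hk2 : ((k:ℝ)+2) ≠ 0 := by positivity
  have h2k : (2:ℝ) ^ (k+1) ≠ 0 := by positivity
  have hq : ((k:ℝ)^2 + 3*k + 2) ≠ 0 := by positivity
  rw [PhiFn_zero h hh.ne' k, PhiFn]
  rw [show h - h/2 = h/2 by ring]
  rw [div_pow, div_pow]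
  rw [pow_succ h (k+1), pow_succ (2:ℝ) (k+1)]
  field_simp
  ring

lemma meshFloor_le (h α : ℝ) (hh : 0 < h) (x : ℝ) : meshFloor h α x ≤ x := by
  have h1 : ((⌊(x - α) / h⌋ : ℝ)) ≤ (x - α) / h := Int.floor_le _
  have h2 : h * ((x - α) / h) = x - α := mul_div_cancel₀ _ hh.ne'
  have := mul_le_mul_of_nonneg_left h1 hh.le
  rw [meshFloor]; linarith

lemma lt_meshFloor_add (h α : ℝ) (hh : 0 < h) (x : ℝ) : x < meshFloor h α x + h := by
  have h1 : (x - α) / h < (⌊(x - α) / h⌋ : ℝ) + 1 := Int.lt_floor_add_one _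
  have h2 : h * ((x - α) / h) = x - α := mul_div_cancel₀ _ hh.ne'
  have := mul_lt_mul_of_pos_left h1 hh
  rw [meshFloor]; linarith

lemma meshFloor_eq_of_mem (h α : ℝ) (hh : 0 < h) (x y : ℝ)
    (hy : meshFloor h α x ≤ y) (hy' : y < meshFloor h α x + h) :
    meshFloor h α y = meshFloor h α x := by
  have hfl : ⌊(y - α) / h⌋ = ⌊(x - α) / h⌋ := by
    rw [Int.floor_eq_iff]
    constructor
    · rw [le_div_iff₀ hh]
      rw [meshFloor] at hy; linarith
    · rw [div_lt_iff₀ hh]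
      rw [meshFloor] at hy'; linarith
  rw [meshFloor, meshFloor, hfl]

lemma sub_meshFloor_eq (h α : ℝ) (hh : 0 < h) (x : ℝ) :
    x - meshFloor h α x = h * Int.fract ((x - α) / h) := by
  rw [meshFloor, Int.fract]
  field_simp
  ring

lemma continuous_comp_meshFloor (h α : ℝ) (hh : 0 < h) (F : ℝ → ℝ)
    (hF : Continuous F) (hF0 : F 0 = F h) :
    Continuous (fun x => F (x - meshFloor h α x)) := by
  have key : Continuous (fun x : ℝ => F (h * Int.fract ((x - α) / h))) := by
    apply ContinuousOn.comp_fract (f := fun (_ : ℝ) (t : ℝ) => F (h * t))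
      (s := fun x => (x - α) / h)
    · exact (hF.comp (continuous_const.mul continuous_snd)).continuousOn
    · exact (continuous_id.sub continuous_const).div_const h
    · intro s; simp [hF0]
  refine key.congr fun x => ?_
  rw [sub_meshFloor_eq h α hh x]

theorem stoch_round_signed_error_int
    (h α : ℝ) (hh : 0 < h) (k : ℕ) (hk : 1 ≤ k) (hodd : Odd k)
    (a b : ℝ) (hab : a ≤ b) :
    |∫ x in a..b, stochSignedErr h α k x|
      ≤ ((1 - ((k : ℝ) + 3) / 2 ^ (k + 1)) / ((k : ℝ) ^ 2 + 3 * k + 2)) * h ^ (k + 1) := by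
  have hh' : h ≠ 0 := hh.ne'
  have hk0 : k ≠ 0 := by omega
  have hcontPhi : Continuous (PhiFn h k) :=
    continuous_iff_continuousAt.2 fun u => (hasDerivAt_PhiFn h hh' k hodd u).continuousAt
  set W : ℝ → ℝ := fun x => PhiFn h k (x - meshFloor h α x) with hWdef
  have hWcont : Continuous W :=
    continuous_comp_meshFloor h α hh _ hcontPhi (PhiFn_h h hh' k).symm
  -- continuity of the integrand
  have hphicont : Continuous (phiFn h k) := by
    unfold phiFn
    exact ((continuous_neg.pow k).mul
        (continuous_const.sub (continuous_id.div_const h))).add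
      (((continuous_const.sub continuous_id).pow k).mul (continuous_id.div_const h))
  have hphi0 : phiFn h k 0 = 0 := by
    simp [phiFn, zero_pow hk0]
  have hphih : phiFn h k h = 0 := by
    simp [phiFn, div_self hh', zero_pow hk0]
  have hScont : Continuous (stochSignedErr h α k) := by
    have := continuous_comp_meshFloor h α hh (phiFn h k) hphicont (by rw [hphi0, hphih])
    exact this.congr fun x => (stoch_eq_phi h α k x).symm
  -- right derivative of W
  have hderiv : ∀ x ∈ Ioo a b, HasDerivWithinAt W (stochSignedErr h α k x) (Ioi x) x := by
    intro x _
    have hxm : meshFloor h α x ≤ x := meshFloor_le h α hh x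
    have hxm' : x < meshFloor h α x + h := lt_meshFloor_add h α hh x
    have hD : HasDerivAt (fun y => PhiFn h k (y - meshFloor h α x))
        (phiFn h k (x - meshFloor h α x)) x := by
      have := (hasDerivAt_PhiFn h hh' k hodd (x - meshFloor h α x)).comp x
        ((hasDerivAt_id x).sub_const (meshFloor h α x))
      simpa [Function.comp_def] using this
    rw [stoch_eq_phi h α k x]
    refine hD.hasDerivWithinAt.congr_of_eventuallyEq ?_ rfl
    filter_upwards [Ioo_mem_nhdsGT_of_mem (⟨le_refl x, hxm'⟩ : x ∈ Ico x (meshFloor h α x + h))]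
      with y hy
    have : meshFloor h α y = meshFloor h α x :=
      meshFloor_eq_of_mem h α hh x y (le_trans hxm hy.1.le) hy.2
    simp only [hWdef, this]
  have hInt : IntervalIntegrable (stochSignedErr h α k) volume a b :=
    hScont.intervalIntegrable a b
  have hEq : ∫ x in a..b, stochSignedErr h α k x = W b - W a :=
    intervalIntegral.integral_eq_sub_of_hasDeriv_right_of_le hab hWcont.continuousOn hderiv hInt
  -- monotonicity of PhiFn on the two half-cells
  have hdiff : ∀ x : ℝ, DifferentiableAt ℝ (PhiFn h k) x :=
    fun x => (hasDerivAt_PhiFn h hh' k hodd x).differentiableAt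
  have hderivval : ∀ x : ℝ, deriv (PhiFn h k) x = phiFn h k x :=
    fun x => (hasDerivAt_PhiFn h hh' k hodd x).deriv
  have hmono : MonotoneOn (PhiFn h k) (Icc 0 (h/2)) := by
    apply monotoneOn_of_deriv_nonneg (convex_Icc _ _) hcontPhi.continuousOn
      (fun x _ => (hdiff x).differentiableWithinAt)
    intro x hx
    rw [interior_Icc] at hx
    rw [hderivval x]
    exact phiFn_nonneg h hh k hk hodd hx.1.le hx.2.le
  have hanti : AntitoneOn (PhiFn h k) (Icc (h/2) h) := by
    apply antitoneOn_of_deriv_nonpos (convex_Icc _ _) hcontPhi.continuousOn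
      (fun x _ => (hdiff x).differentiableWithinAt)
    intro x hx
    rw [interior_Icc] at hx
    rw [hderivval x]
    exact phiFn_nonpos h hh k hk hodd hx.1.le hx.2.le
  have hhalf0 : (0:ℝ) ≤ h/2 := by linarith
  have hhalfh : h/2 ≤ h := by linarith
  -- bounds on W
  have hbound : ∀ x : ℝ, PhiFn h k 0 ≤ W x ∧ W x ≤ PhiFn h k (h/2) := by
    intro x
    have hu0 : 0 ≤ x - meshFloor h α x := by
      have := meshFloor_le h α hh x; linarith
    have hu1 : x - meshFloor h α x ≤ h := by
      have := lt_meshFloor_add h α hh x; linarith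
    rcases le_total (x - meshFloor h α x) (h/2) with hc | hc
    · exact ⟨hmono ⟨le_rfl, hhalf0⟩ ⟨hu0, hc⟩ hu0, hmono ⟨hu0, hc⟩ ⟨hhalf0, le_rfl⟩ hc⟩
    · constructor
      · rw [← PhiFn_h h hh' k]
        exact hanti ⟨hc, hu1⟩ ⟨hhalfh, le_rfl⟩ hu1
      · exact hanti ⟨le_rfl, hhalfh⟩ ⟨hc, hu1⟩ hc
  have hb := hbound b
  have ha := hbound a
  rw [hEq, ← PhiFn_half_sub h hh k]
  apply abs_le.mpr
  constructor <;> [skip; skip] <;> linarith [hb.1, hb.2, ha.1, ha.2]
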